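/- Let G be a group in which every almost normal subgroup is profinitely closed (an intersection of finite-index subgroups of G), and let H be a finite group acting on G. Then every almost normal subgroup of G ⋊ H is profinitely closed in G ⋊ H. -/

import Mathlib

open scoped Pointwise


/-- If every almost normal subgroup of `G` (i.e. one whose normalizer has finite index)
is profinitely closed (an intersection of finite-index subgroups), and `H` is a finite
group acting on `G`, then every almost normal subgroup of `G ⋊ H` is profinitely
closed in `G ⋊ H`. -/
theorem stmt_15 {G H : Type*} [Group G] [Group H] [Finite H] (φ : H →* MulAut G)
    (hG : ∀ L : Subgroup G, (Subgroup.normalizer (L : Set G)).FiniteIndex →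
      ∃ K : ℕ → Subgroup G, (∀ i, (K i).FiniteIndex) ∧ L = ⨅ i, K i)
    (L : Subgroup (G ⋊[φ] H)) (hL : (Subgroup.normalizer (L : Set (G ⋊[φ] H))).FiniteIndex) :
    ∃ K : ℕ → Subgroup (G ⋊[φ] H), (∀ i, (K i).FiniteIndex) ∧ L = ⨅ i, K i := by
  classical
  haveI := hL
  set ι : G →* G ⋊[φ] H := SemidirectProduct.inl
  set π : G ⋊[φ] H →* H := SemidirectProduct.rightHom
  have hkerι : ι.ker = ⊥ := (MonoidHom.ker_eq_bot_iff _).mpr SemidirectProduct.inl_injective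
  have hrange : ι.range = π.ker := SemidirectProduct.range_inl_eq_ker_rightHom
  set L₀ : Subgroup G := L.comap ι with hL₀def
  -- L₀ is almost normal in G
  have hle : (Subgroup.normalizer (L : Set (G ⋊[φ] H))).comap ι ≤ Subgroup.normalizer (L₀ : Set G) := by
    intro x hx
    rw [Subgroup.mem_comap] at hx
    rw [Subgroup.mem_normalizer_iff] at hx ⊢
    intro h
    have := hx (ι h)
    simpa [hL₀def, Subgroup.mem_comap, map_mul, map_inv] using this
  have hfc : ((Subgroup.normalizer (L : Set (G ⋊[φ] H))).comap ι).FiniteIndex := by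
    constructor
    rw [Subgroup.index_comap]
    have : ((Subgroup.normalizer (L : Set (G ⋊[φ] H))).subgroupOf ι.range).FiniteIndex := by infer_instance
    exact this.index_ne_zero
  haveI := hfc
  have hfin₀ : (Subgroup.normalizer (L₀ : Set G)).FiniteIndex := Subgroup.finiteIndex_of_le hle
  obtain ⟨K, hKfin, hK⟩ := hG L₀ hfin₀
  -- finite index of the image of each K i in the semidirect product
  have hrangeFin : ι.range.index ≠ 0 := by
    rw [hrange, Subgroup.index_ker]
    have : Nonempty π.range := ⟨1⟩
    exact Nat.card_pos.ne'
  have hPfin : ∀ i, ((K i).map ι).FiniteIndex := by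
    intro i
    constructor
    rw [Subgroup.index_map, hkerι, sup_bot_eq]
    exact mul_ne_zero (hKfin i).index_ne_zero hrangeFin
  set M : ℕ → Subgroup (G ⋊[φ] H) := fun i => ((K i).map ι).normalCore with hMdef
  have hMfin : ∀ i, (M i).FiniteIndex := fun i => by
    haveI := hPfin i
    show ((K i).map ι).normalCore.FiniteIndex
    infer_instance
  have hMnormal : ∀ i, (M i).Normal := fun i => Subgroup.normalCore_normal _
  have hMle : ∀ i, M i ≤ (K i).map ι := fun i => Subgroup.normalCore_le _
  refine ⟨fun i => M i ⊔ L, fun i => ?_, ?_⟩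
  · haveI := hMfin i
    exact Subgroup.finiteIndex_of_le le_sup_left
  · refine le_antisymm (le_iInf fun i => le_sup_right) ?_
    intro g hg
    simp only [Subgroup.mem_iInf] at hg
    -- decompose g ∈ M i ⊔ L as a product, using normality of M i
    have hdecomp : ∀ i, ∃ m ∈ M i, ∃ l ∈ L, m * l = g := by
      intro i
      haveI := hMnormal i
      have : g ∈ ((M i : Set (G ⋊[φ] H)) * (L : Set (G ⋊[φ] H))) := by
        rw [← Subgroup.normal_mul]; exact hg i
      rw [Set.mem_mul] at this
      obtain ⟨m, hm, l, hl, hml⟩ := this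
      exact ⟨m, hm, l, hl, hml⟩
    obtain ⟨m₀, hm₀, ℓ, hℓ, hml₀⟩ := hdecomp 0
    -- every element of M i is in the kernel of π
    have hMker : ∀ i, ∀ m ∈ M i, π m = 1 := by
      intro i m hm
      have : m ∈ ι.range := by
        obtain ⟨a, _, rfl⟩ := hMle i hm
        exact ⟨a, rfl⟩
      rwa [hrange, MonoidHom.mem_ker] at this
    have hπg : π g = π ℓ := by
      rw [← hml₀, map_mul, hMker 0 m₀ hm₀, one_mul]
    -- h := ℓ⁻¹ * g lies in the range of ι
    have hπh : π (ℓ⁻¹ * g) = 1 := by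
      rw [map_mul, map_inv, hπg, inv_mul_cancel]
    obtain ⟨y, hy⟩ : ℓ⁻¹ * g ∈ ι.range := by
      rw [hrange, MonoidHom.mem_ker]; exact hπh
    -- for each i, y ∈ K i
    have hyK : ∀ i, y ∈ K i := by
      intro i
      obtain ⟨m, hm, l, hl, hml⟩ := hdecomp i
      haveI := hMnormal i
      -- ℓ⁻¹ * g = (ℓ⁻¹ * m * ℓ) * (ℓ⁻¹ * l)
      have hm' : ℓ⁻¹ * m * ℓ ∈ M i := (hMnormal i).conj_mem' m hm ℓ
      have hx : ℓ⁻¹ * l ∈ L := L.mul_mem (L.inv_mem hℓ) hl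
      have hπx : π (ℓ⁻¹ * l) = 1 := by
        have : π g = π m * π l := by rw [← hml, map_mul]
        rw [hMker i m hm, one_mul] at this
        rw [map_mul, map_inv, ← this, hπg, inv_mul_cancel]
      obtain ⟨z, hz⟩ : ℓ⁻¹ * l ∈ ι.range := by
        rw [hrange, MonoidHom.mem_ker]; exact hπx
      have hzL₀ : z ∈ L₀ := by
        rw [hL₀def, Subgroup.mem_comap, hz]; exact hx
      have hzK : z ∈ K i := by
        have : L₀ ≤ K i := hK ▸ iInf_le K i
        exact this hzL₀
      -- ι (y * z⁻¹) = ℓ⁻¹ * m * ℓ ∈ M i ≤ map ι (K i)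
      have heq : ι (y * z⁻¹) = ℓ⁻¹ * m * ℓ := by
        have : ℓ⁻¹ * g = (ℓ⁻¹ * m * ℓ) * (ℓ⁻¹ * l) := by
          rw [← hml]; group
        rw [map_mul, map_inv, hy, hz, this]
        group
      have hmem : ι (y * z⁻¹) ∈ (K i).map ι := by
        rw [heq]; exact hMle i hm'
      obtain ⟨a, ha, hae⟩ := hmem
      have : a = y * z⁻¹ := SemidirectProduct.inl_injective hae
      subst this
      have : (y * z⁻¹) * z ∈ K i := (K i).mul_mem ha hzK
      simpa using this
    have hyL₀ : y ∈ L₀ := by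
      rw [hK, Subgroup.mem_iInf]; exact hyK
    have : ι y ∈ L := hyL₀
    rw [hy] at this
    have := L.mul_mem hℓ this
    simpa using this
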